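/- Assume the Problem-B setup. Suppose there exist maps L_n : F → F_n (n ∈ ℕ) such that: (a) for every f ∈ B there exists a sequence f_n ∈ B_n with lim_{n→∞} ‖f_n − L_n(f)‖*_n = 0; (b) for every h ∈ F with ‖φ − h‖* > 0, limsup_{n→∞} ‖φ_n − L_n(h)‖*_n ≤ ‖φ − h‖*. Then limsup_{n→∞} E(φ_n, B_n) ≤ E(φ, B). -/

import Mathlib

open Filter Topology NNReal ENNReal

/-- Corollary 2.14 (i), Problem B: under conditions (a) and (b) on the
operators `L_n`, the errors of best approximation satisfy
`limsup E(φ_n, B_n) ≤ E(φ, B)`. -/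
theorem limsup_best_approx_le
    (β : ℝ) (hβ0 : 0 < β) (hβ1 : β ≤ 1)
    -- the β-normed space F
    (F : Type*) [AddCommGroup F] [Module ℂ F] (Ns : F → ℝ≥0)
    (hN0 : ∀ f : F, Ns f = 0 ↔ f = 0)
    (hNh : ∀ (α : ℂ) (f : F), Ns (α • f) = ‖α‖₊ * Ns f)
    (hNt : ∀ f g : F, Ns (f + g) ^ β ≤ Ns f ^ β + Ns g ^ β)
    -- the β-normed spaces F_n
    (Fn : ℕ → Type*) [∀ n, AddCommGroup (Fn n)] [∀ n, Module ℂ (Fn n)]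
    (Nsn : ∀ n, Fn n → ℝ≥0)
    (hN0n : ∀ n (f : Fn n), Nsn n f = 0 ↔ f = 0)
    (hNhn : ∀ n (α : ℂ) (f : Fn n), Nsn n (α • f) = ‖α‖₊ * Nsn n f)
    (hNtn : ∀ n (f g : Fn n), Nsn n (f + g) ^ β ≤ Nsn n f ^ β + Nsn n g ^ β)
    -- the nonempty proper subsets B and B_n
    (B : Set F) (hBne : B.Nonempty) (hBpr : B ≠ Set.univ)
    (Bn : ∀ n, Set (Fn n)) (hBnne : ∀ n, (Bn n).Nonempty) (hBnpr : ∀ n, Bn n ≠ Set.univ)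
    -- the fixed elements φ and φ_n
    (φ : F) (hφ : φ ∉ B) (φn : ∀ n, Fn n) (hφn : ∀ n, φn n ∉ Bn n)
    -- positivity of the errors of best approximation
    (hE : 0 < ⨅ f ∈ B, (Ns (φ - f) : ℝ≥0∞))
    (hEn : ∀ n, 0 < ⨅ f ∈ Bn n, (Nsn n (φn n - f) : ℝ≥0∞))
    -- the operators L_n
    (L : ∀ n, F → Fn n)
    -- (a)
    (ha : ∀ f ∈ B, ∃ fn : ∀ n, Fn n, (∀ n, fn n ∈ Bn n) ∧
        Filter.Tendsto (fun n => Nsn n (fn n - L n f)) Filter.atTop (nhds 0))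
    -- (b)
    (hb : ∀ h : F, 0 < Ns (φ - h) →
        Filter.limsup (fun n => (Nsn n (φn n - L n h) : ℝ≥0∞)) Filter.atTop
          ≤ (Ns (φ - h) : ℝ≥0∞)) :
    Filter.limsup (fun n => ⨅ f ∈ Bn n, (Nsn n (φn n - f) : ℝ≥0∞)) Filter.atTop
      ≤ ⨅ f ∈ B, (Ns (φ - f) : ℝ≥0∞) := by

  have hβ0' : (0:ℝ) ≤ β := hβ0.le
  refine le_iInf₂ fun f hf => ?_
  obtain ⟨fn, hfnB, htend⟩ := ha f hf
  have hpos : 0 < Ns (φ - f) := by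
    rw [pos_iff_ne_zero]
    intro h0
    have h1 : φ - f = 0 := (hN0 _).mp h0
    rw [sub_eq_zero] at h1
    exact hφ (h1 ▸ hf)
  -- abbreviations
  set a : ℕ → ℝ≥0∞ := fun n => (Nsn n (φn n - L n f) : ℝ≥0∞) with ha_def
  set b : ℕ → ℝ≥0∞ := fun n => (Nsn n (fn n - L n f) : ℝ≥0∞) with hb_def
  set c : ℕ → ℝ≥0∞ := fun n => (Nsn n (φn n - fn n) : ℝ≥0∞) with hc_def
  have step1 : Filter.limsup (fun n => ⨅ g ∈ Bn n, (Nsn n (φn n - g) : ℝ≥0∞)) Filter.atTop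
      ≤ Filter.limsup c Filter.atTop := by
    refine Filter.limsup_le_limsup (Filter.Eventually.of_forall fun n => ?_)
    exact iInf₂_le (fn n) (hfnB n)
  refine step1.trans ?_
  -- the key pointwise inequality after raising to power β
  have key : ∀ n, c n ^ β ≤ a n ^ β + b n ^ β := by
    intro n
    have hdec : φn n - fn n = (φn n - L n f) + (L n f - fn n) := by abel
    have hneg : Nsn n (L n f - fn n) = Nsn n (fn n - L n f) := by
      have := hNhn n (-1) (fn n - L n f)
      simpa [neg_sub] using this
    have htri := hNtn n (φn n - L n f) (L n f - fn n)
    rw [hneg] at htri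
    rw [hc_def, ha_def, hb_def]
    simp only [← ENNReal.coe_rpow_of_nonneg _ hβ0', ← ENNReal.coe_add, ENNReal.coe_le_coe]
    rw [hdec]
    exact htri
  -- limsup of b is 0
  have hb0 : Filter.Tendsto b Filter.atTop (nhds 0) := by
    rw [hb_def]
    have := ENNReal.tendsto_coe.mpr htend
    simpa using this
  have hbβ0 : Filter.Tendsto (fun n => b n ^ β) Filter.atTop (nhds 0) := by
    have := (ENNReal.continuous_rpow_const (y := β)).continuousAt (x := (0:ℝ≥0∞)) |>.tendsto.comp hb0
    simpa [ENNReal.zero_rpow_of_pos hβ0, Function.comp_def] using this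
  have hlimsupbβ : Filter.limsup (fun n => b n ^ β) Filter.atTop = 0 := hbβ0.limsup_eq
  -- limsup a ≤ Ns (φ - f)
  have hlimsupa : Filter.limsup a Filter.atTop ≤ (Ns (φ - f) : ℝ≥0∞) := hb f hpos
  -- limsup (c^β) ≤ limsup(a^β) + limsup(b^β)
  have hmono : Monotone fun x : ℝ≥0∞ => x ^ β := fun x y h => ENNReal.rpow_le_rpow h hβ0'
  have hcont : ∀ x : ℝ≥0∞, ContinuousAt (fun x : ℝ≥0∞ => x ^ β) x :=
    fun x => (ENNReal.continuous_rpow_const (y := β)).continuousAt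
  have hmapc : (Filter.limsup c Filter.atTop) ^ β
      = Filter.limsup (fun n => c n ^ β) Filter.atTop :=
    hmono.map_limsup_of_continuousAt c (hcont _)
  have hmapa : (Filter.limsup a Filter.atTop) ^ β
      = Filter.limsup (fun n => a n ^ β) Filter.atTop :=
    hmono.map_limsup_of_continuousAt a (hcont _)
  have hsum : Filter.limsup (fun n => c n ^ β) Filter.atTop
      ≤ Filter.limsup (fun n => a n ^ β) Filter.atTop := by
    refine ENNReal.le_of_forall_pos_le_add fun ε hε _hlt => ?_
    have hev : ∀ᶠ n in Filter.atTop, b n ^ β < (ε : ℝ≥0∞) :=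
      hbβ0.eventually_lt_const (by exact_mod_cast hε)
    have hle : Filter.limsup (fun n => c n ^ β) Filter.atTop
        ≤ Filter.limsup (fun n => a n ^ β + (ε : ℝ≥0∞)) Filter.atTop := by
      refine Filter.limsup_le_limsup (hev.mono fun n hn => ?_)
      exact (key n).trans (add_le_add_right hn.le _)
    rw [limsup_add_const Filter.atTop (fun n => a n ^ β) (ε : ℝ≥0∞)
      (Filter.isBounded_le_of_top) (Filter.isCobounded_le_of_bot)] at hle
    exact hle
  have hfinal : (Filter.limsup c Filter.atTop) ^ β ≤ ((Ns (φ - f) : ℝ≥0∞)) ^ β := by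
    calc (Filter.limsup c Filter.atTop) ^ β
        = Filter.limsup (fun n => c n ^ β) Filter.atTop := hmapc
      _ ≤ Filter.limsup (fun n => a n ^ β) Filter.atTop := hsum
      _ = (Filter.limsup a Filter.atTop) ^ β := hmapa.symm
      _ ≤ ((Ns (φ - f) : ℝ≥0∞)) ^ β := ENNReal.rpow_le_rpow hlimsupa hβ0'
  exact (ENNReal.rpow_le_rpow_iff hβ0).mp hfinal
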